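/- For all real a > 0 and b > 0, ∫₀^∞ e^{−a²x² − b²/x²} dx = (√π/(2a)) e^{−2ab}. -/

import Mathlib

set_option maxHeartbeats 1000000

open MeasureTheory Real

theorem integral_exp_neg_sq_add_inv_sq (a b : ℝ) (ha : 0 < a) (hb : 0 < b) :
    ∫ x in Set.Ioi (0:ℝ), Real.exp (-(a ^ 2 * x ^ 2) - b ^ 2 / x ^ 2)
      = (Real.sqrt π / (2 * a)) * Real.exp (-(2 * a * b)) := by
  set c : ℝ := 4 * a * b with hc_def
  have hc : 0 < c := by positivity
  set s : ℝ → ℝ := fun u => Real.sqrt (u ^ 2 + c) with hs_def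
  have hs_sq : ∀ u, s u ^ 2 = u ^ 2 + c := fun u => Real.sq_sqrt (by positivity)
  have hs_pos : ∀ u, 0 < s u := fun u => Real.sqrt_pos.2 (by positivity)
  have hs_gt : ∀ u, |u| < s u := by
    intro u
    have : Real.sqrt (u ^ 2) < s u := by
      apply Real.sqrt_lt_sqrt (by positivity); linarith
    simpa [Real.sqrt_sq_eq_abs] using this
  have hs_gt' : ∀ u, -u < s u := fun u => lt_of_le_of_lt (neg_le_abs u) (hs_gt u)
  have hs_gt'' : ∀ u, u < s u := fun u => lt_of_le_of_lt (le_abs_self u) (hs_gt u)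
  set φ : ℝ → ℝ := fun u => (u + s u) / (2 * a) with hφ_def
  set φ' : ℝ → ℝ := fun u => (1 + u / s u) / (2 * a) with hφ'_def
  have hφ_pos : ∀ u, 0 < φ u := by
    intro u; apply div_pos _ (by positivity); linarith [hs_gt' u]
  have hderiv : ∀ u, HasDerivAt φ (φ' u) u := by
    intro u
    have h1 : HasDerivAt (fun u : ℝ => u ^ 2 + c) (2 * u) u := by
      simpa using ((hasDerivAt_pow 2 u).add_const c)
    have h2 : HasDerivAt s (u / s u) u := by
      have h2' := (Real.hasDerivAt_sqrt (show u ^ 2 + c ≠ 0 by positivity)).comp u h1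
      refine h2'.congr_deriv ?_
      have hne : Real.sqrt (u ^ 2 + c) ≠ 0 := (hs_pos u).ne'
      simp only [hs_def]
      field_simp
    have h3 : HasDerivAt (fun u => u + s u) (1 + u / s u) u := (hasDerivAt_id u).add h2
    simpa [hφ_def, hφ'_def, div_eq_mul_inv] using h3.div_const (2 * a)
  have hφ'_pos : ∀ u, 0 < φ' u := by
    intro u
    apply div_pos _ (by positivity)
    have := hs_gt' u
    have hspos := hs_pos u
    have : -1 < u / s u := by
      rw [lt_div_iff₀ hspos]; linarith
    linarith
  have hmono : StrictMono φ := by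
    apply strictMono_of_deriv_pos
    intro u; rw [(hderiv u).deriv]; exact hφ'_pos u
  -- range of φ is Ioi 0
  have hrange : φ '' Set.univ = Set.Ioi (0:ℝ) := by
    rw [Set.image_univ]
    ext x
    simp only [Set.mem_range, Set.mem_Ioi]
    constructor
    · rintro ⟨u, rfl⟩; exact hφ_pos u
    · intro hx
      refine ⟨a * x - b / x, ?_⟩
      have hxne : x ≠ 0 := hx.ne'
      have hkey : (a * x - b / x) ^ 2 + c = (a * x + b / x) ^ 2 := by
        field_simp; ring
      have hsval : s (a * x - b / x) = a * x + b / x := by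
        rw [hs_def]; simp only
        rw [hkey, Real.sqrt_sq (by positivity)]
      simp only [hφ_def, hsval]
      field_simp
      ring
  -- key identity
  have hkey : ∀ u, -(a ^ 2 * (φ u) ^ 2) - b ^ 2 / (φ u) ^ 2 = -u ^ 2 - 2 * a * b := by
    intro u
    have hφne : φ u ≠ 0 := (hφ_pos u).ne'
    have h1 : a * φ u = (u + s u) / 2 := by
      simp only [hφ_def]; field_simp
    have h2 : b / φ u = (s u - u) / 2 := by
      rw [div_eq_iff hφne, hφ_def]
      simp only
      have h2' : (s u - u) / 2 * ((u + s u) / (2 * a)) = (s u ^ 2 - u ^ 2) / (4 * a) := by ring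
      rw [h2', hs_sq]
      field_simp [hc_def]
      rw [hc_def]; ring
    have h3 : a ^ 2 * (φ u) ^ 2 = ((u + s u) / 2) ^ 2 := by
      rw [show a ^ 2 * (φ u) ^ 2 = (a * φ u) ^ 2 from by ring, h1]
    have h4 : b ^ 2 / (φ u) ^ 2 = ((s u - u) / 2) ^ 2 := by
      rw [← h2]; exact (div_pow b (φ u) 2).symm
    rw [h3, h4]
    nlinarith [hs_sq u]
  -- change of variables
  have hcov : ∫ x in Set.Ioi (0:ℝ), Real.exp (-(a ^ 2 * x ^ 2) - b ^ 2 / x ^ 2)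
      = ∫ u, |φ' u| • Real.exp (-(a ^ 2 * (φ u) ^ 2) - b ^ 2 / (φ u) ^ 2) := by
    rw [← hrange, integral_image_eq_integral_abs_deriv_smul MeasurableSet.univ
      (fun x _ => (hderiv x).hasDerivWithinAt) (hmono.injective.injOn)]
    simp [Measure.restrict_univ]
  rw [hcov]
  have hsimp : ∀ u, |φ' u| • Real.exp (-(a ^ 2 * (φ u) ^ 2) - b ^ 2 / (φ u) ^ 2)
      = ((1 / (2 * a)) * Real.exp (-(2 * a * b))) * (Real.exp (-u ^ 2) + (u / s u) * Real.exp (-u ^ 2)) := by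
    intro u
    rw [hkey u, abs_of_pos (hφ'_pos u), smul_eq_mul, hφ'_def]
    simp only
    rw [show -u ^ 2 - 2 * a * b = -u ^ 2 + -(2 * a * b) by ring, Real.exp_add]
    ring
  simp only [hsimp]
  rw [integral_const_mul]
  have hint1 : Integrable (fun u : ℝ => Real.exp (-u ^ 2)) := by
    simpa using integrable_exp_neg_mul_sq (one_pos)
  have hint2 : Integrable (fun u : ℝ => (u / s u) * Real.exp (-u ^ 2)) := by
    apply hint1.mono
    · apply Continuous.aestronglyMeasurable
      apply Continuous.mul
      · exact continuous_id.div (Real.continuous_sqrt.comp (by continuity))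
          (fun u => (hs_pos u).ne')
      · exact (Real.continuous_exp.comp (by continuity))
    · filter_upwards with u
      simp only [norm_mul, Real.norm_eq_abs, Real.abs_exp]
      have h1 : |u / s u| ≤ 1 := by
        rw [abs_div, abs_of_pos (hs_pos u), div_le_one (hs_pos u)]
        exact (hs_gt u).le
      nlinarith [Real.exp_pos (-u ^ 2), abs_nonneg (u / s u)]
  rw [integral_add hint1 hint2]
  have hodd : ∫ u : ℝ, (u / s u) * Real.exp (-u ^ 2) = 0 := by
    have h := MeasureTheory.integral_neg_eq_self (fun u : ℝ => (u / s u) * Real.exp (-u ^ 2)) volume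
    have heq : ∀ u : ℝ, ((-u) / s (-u)) * Real.exp (-(-u) ^ 2) = -((u / s u) * Real.exp (-u ^ 2)) := by
      intro u
      have : s (-u) = s u := by simp [hs_def]
      rw [this]; ring_nf
    rw [show (fun u : ℝ => ((-u) / s (-u)) * Real.exp (-(-u) ^ 2)) = (fun u : ℝ => -((u / s u) * Real.exp (-u ^ 2))) from funext heq] at h
    rw [integral_neg] at h
    linarith
  have hgauss : ∫ u : ℝ, Real.exp (-u ^ 2) = Real.sqrt π := by
    simpa using integral_gaussian 1
  rw [hodd, hgauss]
  field_simp
  ring
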